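/- With χ(D, ε) = (D + √(ε² + D²))/2, the update rule ε^{k+1} := ε^k − σ·χ(D, ε^k)/(∂χ/∂ε)(D, ε^k) for D < 0 can be rewritten as ε^{k+1} = (1 − σ·√(D² + (ε^k)²)/(|D| + √(D² + (ε^k)²)))·ε^k, and satisfies 0 < (1−σ)ε^k ≤ ε^{k+1} < ε^k for 0 < σ < 1. -/

import Mathlib

noncomputable def chi (D ε : ℝ) : ℝ := (D + Real.sqrt (ε ^ 2 + D ^ 2)) / 2

theorem eps_update_rewrite (D σ εk : ℝ) (hD : D < 0) (hεk : 0 < εk)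
    (hσ0 : 0 < σ) (hσ1 : σ < 1) :
    let εk1 := εk - σ * chi D εk / (εk / (2 * Real.sqrt (εk ^ 2 + D ^ 2)))
    εk1 = (1 - σ * Real.sqrt (D ^ 2 + εk ^ 2) /
            (|D| + Real.sqrt (D ^ 2 + εk ^ 2))) * εk ∧
    0 < εk1 ∧ (1 - σ) * εk ≤ εk1 ∧ εk1 < εk := by
  intro εk1
  set s := Real.sqrt (εk ^ 2 + D ^ 2) with hs
  have hcomm : Real.sqrt (D ^ 2 + εk ^ 2) = s := by rw [hs, add_comm]
  have hsq : s ^ 2 = εk ^ 2 + D ^ 2 := Real.sq_sqrt (by positivity)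
  have hspos : 0 < s := Real.sqrt_pos.mpr (by positivity)
  have hsD : -D < s := by nlinarith [hsq, hεk.le]
  have habs : |D| = -D := abs_of_neg hD
  have hden : (0:ℝ) < s - D := by linarith
  have hne : (-D + s) ≠ 0 := by linarith
  have heq : εk1 = (1 - σ * s / (-D + s)) * εk := by
    show εk - σ * chi D εk / (εk / (2 * s)) = _
    rw [chi]
    field_simp
    rw [← hs]
    linear_combination (-σ * s) * hsq
  have hfrac_lt : σ * s / (-D + s) < σ := by
    rw [div_lt_iff₀ (by linarith)]
    nlinarith
  have hfrac_pos : 0 < σ * s / (-D + s) := div_pos (by positivity) (by linarith)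
  refine ⟨by rw [heq, hcomm, habs], ?_, ?_, ?_⟩
  · rw [heq]; nlinarith
  · rw [heq]; nlinarith
  · rw [heq]; nlinarith
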